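/- For every influence I, every k ∈ ℕ, every depth-k local policy π, and every local state x ∈ X: max_{d∈D} ν^I_k(π)(x,d) ≤ ν^IO_k(π)(x). -/

import Mathlib

open Finset

section LocalModel

variable {Xl Xn A O U D : Type*}
  [Fintype Xl] [Nonempty Xl] [Fintype Xn] [Nonempty Xn]
  [Fintype A] [Nonempty A] [Fintype O] [Nonempty O]
  [Fintype U] [Nonempty U] [Fintype D] [Nonempty D]

/-- Influence-induced value vectors `ν^I_k(π)(x,d)` of the influence-augmented
sub-problem. A depth-`k` local policy is a function `List O → A`; `π []` is its action
at the empty history and `fun h => π (o :: h)` is the subtree policy `π↓o`. -/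
noncomputable def nuI (Pl : Xl → (Xl × Xn) → A → ℝ) (Pn : Xn → (Xl × Xn) → A → U → ℝ)
    (Ω : O → A → (Xl × Xn) → ℝ) (δ : (Xl × Xn) → D → A → (Xl × Xn) → D)
    (r : A → (Xl × Xn) → ℝ) (I : D → U → ℝ) :
    ℕ → (List O → A) → (Xl × Xn) → D → ℝ
  | 0 => fun _ _ _ => 0
  | k + 1 => fun π x d =>
      r (π []) x + ∑ o : O, ∑ x' : Xl × Xn,
        Ω o (π []) x' * Pl x'.1 x (π []) *
          (∑ u : U, Pn x'.2 x (π []) u * I d u) *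
          nuI Pl Pn Ω δ r I k (fun h => π (o :: h)) x' (δ x d (π []) x')

/-- Influence-optimistic (IO, Q-MPOMDP style) value vectors `ν^IO_k(π)(x)`. -/
noncomputable def nuIO (Pl : Xl → (Xl × Xn) → A → ℝ) (Pn : Xn → (Xl × Xn) → A → U → ℝ)
    (Ω : O → A → (Xl × Xn) → ℝ) (r : A → (Xl × Xn) → ℝ) :
    ℕ → (List O → A) → (Xl × Xn) → ℝ
  | 0 => fun _ _ => 0
  | k + 1 => fun π x =>
      r (π []) x + ∑ o : O,
        Finset.univ.sup' Finset.univ_nonempty (fun u : U =>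
          ∑ x' : Xl × Xn,
            Ω o (π []) x' * Pl x'.1 x (π []) * Pn x'.2 x (π []) u *
              nuIO Pl Pn Ω r k (fun h => π (o :: h)) x')

end LocalModel

section LocalModel

variable {Xl Xn A O U D : Type*}
  [Fintype Xl] [Nonempty Xl] [Fintype Xn] [Nonempty Xn]
  [Fintype A] [Nonempty A] [Fintype O] [Nonempty O]
  [Fintype U] [Nonempty U] [Fintype D] [Nonempty D]

/-- the influence-optimistic value vectors pointwise dominate the
influence-induced value vectors, uniformly over d-separating-set values. -/
theorem nuI_le_nuIO
    (Pl : Xl → (Xl × Xn) → A → ℝ) (Pn : Xn → (Xl × Xn) → A → U → ℝ)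
    (Ω : O → A → (Xl × Xn) → ℝ) (δ : (Xl × Xn) → D → A → (Xl × Xn) → D)
    (r : A → (Xl × Xn) → ℝ)
    (hPl0 : ∀ x'l x a, 0 ≤ Pl x'l x a) (hPl1 : ∀ x a, ∑ x'l : Xl, Pl x'l x a = 1)
    (hPn0 : ∀ x'n x a u, 0 ≤ Pn x'n x a u) (hPn1 : ∀ x a u, ∑ x'n : Xn, Pn x'n x a u = 1)
    (hΩ0 : ∀ o a x', 0 ≤ Ω o a x') (hΩ1 : ∀ a x', ∑ o : O, Ω o a x' = 1)
    (I : D → U → ℝ) (hI0 : ∀ d u, 0 ≤ I d u) (hI1 : ∀ d, ∑ u : U, I d u = 1)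
    (k : ℕ) (π : List O → A) (x : Xl × Xn) :
    Finset.univ.sup' Finset.univ_nonempty (fun d : D => nuI Pl Pn Ω δ r I k π x d) ≤
      nuIO Pl Pn Ω r k π x := by
  have main : ∀ (k : ℕ) (π : List O → A) (x : Xl × Xn) (d : D),
      nuI Pl Pn Ω δ r I k π x d ≤ nuIO Pl Pn Ω r k π x := by
    intro k
    induction k with
    | zero => intro π x d; simp [nuI, nuIO]
    | succ k ih =>
      intro π x d
      simp only [nuI, nuIO]
      apply add_le_add le_rfl
      apply Finset.sum_le_sum
      intro o _
      set a := π [] with ha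
      set ν : (Xl × Xn) → ℝ := fun x' => nuI Pl Pn Ω δ r I k (fun h => π (o :: h)) x' (δ x d a x') with hν
      set M : ℝ := Finset.univ.sup' Finset.univ_nonempty (fun u : U =>
          ∑ x' : Xl × Xn, Ω o a x' * Pl x'.1 x a * Pn x'.2 x a u *
            nuIO Pl Pn Ω r k (fun h => π (o :: h)) x') with hM
      calc ∑ x' : Xl × Xn, Ω o a x' * Pl x'.1 x a * (∑ u : U, Pn x'.2 x a u * I d u) * ν x'
          = ∑ u : U, I d u * ∑ x' : Xl × Xn,
              Ω o a x' * Pl x'.1 x a * Pn x'.2 x a u * ν x' := by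
            simp_rw [Finset.mul_sum, Finset.sum_mul]
            rw [Finset.sum_comm]
            exact Finset.sum_congr rfl fun u _ => Finset.sum_congr rfl fun x' _ => by ring
        _ ≤ ∑ u : U, I d u * M := by
            apply Finset.sum_le_sum
            intro u _
            apply mul_le_mul_of_nonneg_left _ (hI0 d u)
            calc ∑ x' : Xl × Xn, Ω o a x' * Pl x'.1 x a * Pn x'.2 x a u * ν x'
                ≤ ∑ x' : Xl × Xn, Ω o a x' * Pl x'.1 x a * Pn x'.2 x a u *
                    nuIO Pl Pn Ω r k (fun h => π (o :: h)) x' := by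
                  apply Finset.sum_le_sum
                  intro x' _
                  exact mul_le_mul_of_nonneg_left (ih _ _ _)
                    (mul_nonneg (mul_nonneg (hΩ0 o a x') (hPl0 x'.1 x a)) (hPn0 x'.2 x a u))
              _ ≤ M := by
                rw [hM]
                exact Finset.le_sup' (fun u : U =>
                  ∑ x' : Xl × Xn, Ω o a x' * Pl x'.1 x a * Pn x'.2 x a u *
                    nuIO Pl Pn Ω r k (fun h => π (o :: h)) x') (Finset.mem_univ u)
        _ = M := by rw [← Finset.sum_mul, hI1, one_mul]
  apply Finset.sup'_le
  intro d _
  exact main k π x d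

end LocalModel
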